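/- (Lemma 3, single-point Jacobian estimator.) Let f : ℝ^d → ℝ^m be measurable, θ ∈ ℝ^d, α > 0, and let z be an integrable random vector in ℝ^d with E[z] = 0 such that the random d×m matrix z · f(θ + αz)ᵀ is entrywise integrable. Then E[z · (f(θ + αz)/α)ᵀ] = E[z · ((f(θ + αz) − f(θ))/α)ᵀ]. Consequently, if in addition f is differentiable with Jacobian J_f that is L_J-Lipschitz in operator norm, the coordinates of z are mutually independent with mean 0 and variance 1, and E[‖z‖³] < ∞, then ‖E[z · (f(θ + αz)/α)ᵀ] − J_f(θ)ᵀ‖ ≤ (L_J α / 2) · E[‖z‖³] in the operator norm, so the single-point estimator is an unbiased estimator of J_f(θ)ᵀ in the limit α → 0. -/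

import Mathlib

open MeasureTheory ProbabilityTheory
open scoped RealInnerProductSpace BigOperators

/-- The outer product `u vᵀ` of `u ∈ ℝ^d` and `v ∈ ℝ^m`, viewed as the linear map
`ℝ^m → ℝ^d`, `e ↦ ⟪v, e⟫ • u`, equipped with the operator norm induced by the
Euclidean norms. -/
noncomputable def outerCLM {d m : ℕ} (u : EuclideanSpace ℝ (Fin d))
    (v : EuclideanSpace ℝ (Fin m)) :
    EuclideanSpace ℝ (Fin m) →L[ℝ] EuclideanSpace ℝ (Fin d) :=
  (innerSL ℝ v).smulRight u

section Aux

variable {d m : ℕ} {Ω : Type*} [MeasurableSpace Ω] {μ : Measure Ω} [IsProbabilityMeasure μ]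

lemma outerCLM_smul_right (u : EuclideanSpace ℝ (Fin d)) (c : ℝ)
    (v : EuclideanSpace ℝ (Fin m)) : outerCLM u (c • v) = c • outerCLM u v := by
  ext e
  simp only [outerCLM, ContinuousLinearMap.smulRight_apply, innerSL_apply_apply,
    real_inner_smul_left, ContinuousLinearMap.smul_apply, PiLp.smul_apply, smul_eq_mul]
  ring

lemma outerCLM_sub_right (u : EuclideanSpace ℝ (Fin d))
    (v w : EuclideanSpace ℝ (Fin m)) : outerCLM u (v - w) = outerCLM u v - outerCLM u w := by
  ext e
  simp only [outerCLM, ContinuousLinearMap.smulRight_apply, innerSL_apply_apply, inner_sub_left,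
    sub_smul, ContinuousLinearMap.sub_apply]

lemma outerCLM_norm_le (u : EuclideanSpace ℝ (Fin d)) (v : EuclideanSpace ℝ (Fin m)) :
    ‖outerCLM u v‖ ≤ ‖u‖ * ‖v‖ := by
  refine ContinuousLinearMap.opNorm_le_bound _ (by positivity) fun e => ?_
  show ‖⟪v, e⟫ • u‖ ≤ ‖u‖ * ‖v‖ * ‖e‖
  rw [norm_smul]
  calc ‖⟪v, e⟫‖ * ‖u‖ ≤ ‖v‖ * ‖e‖ * ‖u‖ := by
        gcongr
        exact abs_real_inner_le_norm v e
    _ = ‖u‖ * ‖v‖ * ‖e‖ := by ring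

lemma outerCLM_continuous :
    Continuous (fun p : EuclideanSpace ℝ (Fin d) × EuclideanSpace ℝ (Fin m) =>
      outerCLM p.1 p.2) := by
  have : (fun p : EuclideanSpace ℝ (Fin d) × EuclideanSpace ℝ (Fin m) => outerCLM p.1 p.2)
      = fun p => (ContinuousLinearMap.smulRightL ℝ (EuclideanSpace ℝ (Fin m))
          (EuclideanSpace ℝ (Fin d))) (innerSL ℝ p.2) p.1 := rfl
  rw [this]
  exact (((ContinuousLinearMap.smulRightL ℝ _ _).continuous.comp
    ((innerSL ℝ).continuous.comp continuous_snd)).clm_apply continuous_fst)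

lemma norm_sq_le (x : EuclideanSpace ℝ (Fin d)) : ‖x‖ ^ 2 ≤ 1 + ‖x‖ ^ 3 := by
  rcases le_total (‖x‖) 1 with h | h
  · nlinarith [norm_nonneg x]
  · nlinarith [norm_nonneg x]

lemma coord_abs (x : EuclideanSpace ℝ (Fin d)) (i : Fin d) : |x i| ≤ ‖x‖ := by
  rw [EuclideanSpace.norm_eq]
  rw [show |x i| = Real.sqrt (x i ^ 2) by rw [Real.sqrt_sq_eq_abs]]
  apply Real.sqrt_le_sqrt
  calc x i ^ 2 = ‖x i‖ ^ 2 := by rw [Real.norm_eq_abs, sq_abs]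
    _ ≤ ∑ k, ‖x k‖ ^ 2 := Finset.single_le_sum (f := fun k => ‖x k‖ ^ 2)
        (fun k _ => by positivity) (Finset.mem_univ i)

lemma coord_int (z : Ω → EuclideanSpace ℝ (Fin d)) (hzint : Integrable z μ) (i : Fin d) :
    Integrable (fun ω => z ω i) μ :=
  (EuclideanSpace.proj i : EuclideanSpace ℝ (Fin d) →L[ℝ] ℝ).integrable_comp hzint

lemma coord_mul_int (z : Ω → EuclideanSpace ℝ (Fin d)) (hzm : Measurable z)
    (hz3 : Integrable (fun ω => ‖z ω‖ ^ 3) μ) (i j : Fin d) :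
    Integrable (fun ω => z ω i * z ω j) μ := by
  have hmi : ∀ k : Fin d, Measurable fun ω => z ω k := fun k =>
    ((EuclideanSpace.proj k : EuclideanSpace ℝ (Fin d) →L[ℝ] ℝ).continuous.measurable).comp hzm
  refine Integrable.mono' ((integrable_const (1:ℝ)).add hz3)
    ((hmi i).mul (hmi j)).aestronglyMeasurable
    (Filter.Eventually.of_forall fun ω => ?_)
  calc ‖z ω i * z ω j‖ = |z ω i| * |z ω j| := by rw [Real.norm_eq_abs, abs_mul]
    _ ≤ ‖z ω‖ * ‖z ω‖ := mul_le_mul (coord_abs _ i) (coord_abs _ j) (abs_nonneg _) (norm_nonneg _)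
    _ = ‖z ω‖ ^ 2 := (sq (‖z ω‖)).symm
    _ ≤ 1 + ‖z ω‖ ^ 3 := norm_sq_le _

lemma second_moment (z : Ω → EuclideanSpace ℝ (Fin d)) (hzm : Measurable z)
    (hzint : Integrable z μ) (hz3 : Integrable (fun ω => ‖z ω‖ ^ 3) μ)
    (hindep : iIndepFun (fun i ω => z ω i) μ)
    (hmean : ∀ i, ∫ ω, z ω i ∂μ = 0) (hvar : ∀ i, ∫ ω, (z ω i) ^ 2 ∂μ = 1)
    (i j : Fin d) : ∫ ω, z ω i * z ω j ∂μ = if i = j then 1 else 0 := by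
  rcases eq_or_ne i j with rfl | hij
  · simpa [← sq] using hvar i
  · rw [if_neg hij]
    have := (hindep.indepFun hij).integral_mul_eq_mul_integral (coord_int z hzint i).aestronglyMeasurable
      (coord_int z hzint j).aestronglyMeasurable
    rw [show (fun ω => z ω i * z ω j) = ((fun ω => z ω i) * fun ω => z ω j) from rfl, this,
      hmean i, hmean j, mul_zero]

lemma smul_int (z : Ω → EuclideanSpace ℝ (Fin d)) (hzm : Measurable z)
    (hz3 : Integrable (fun ω => ‖z ω‖ ^ 3) μ) (c : EuclideanSpace ℝ (Fin d)) :
    Integrable (fun ω => ⟪z ω, c⟫ • z ω) μ := by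
  refine Integrable.mono' (((integrable_const (1:ℝ)).add hz3).const_mul ‖c‖)
    (show Measurable (fun ω => ⟪z ω, c⟫ • z ω) from ((Continuous.inner (𝕜 := ℝ) (continuous_id) (continuous_const)).measurable.comp hzm).smul
      hzm).aestronglyMeasurable (Filter.Eventually.of_forall fun ω => ?_)
  rw [norm_smul]
  calc ‖⟪z ω, c⟫‖ * ‖z ω‖ ≤ ‖z ω‖ * ‖c‖ * ‖z ω‖ := by
        gcongr; exact abs_real_inner_le_norm _ _
    _ = ‖c‖ * ‖z ω‖ ^ 2 := by ring
    _ ≤ ‖c‖ * (1 + ‖z ω‖ ^ 3) :=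
        mul_le_mul_of_nonneg_left (norm_sq_le _) (norm_nonneg c)

lemma key_vector (z : Ω → EuclideanSpace ℝ (Fin d)) (hzm : Measurable z)
    (hzint : Integrable z μ) (hz3 : Integrable (fun ω => ‖z ω‖ ^ 3) μ)
    (hindep : iIndepFun (fun i ω => z ω i) μ)
    (hmean : ∀ i, ∫ ω, z ω i ∂μ = 0) (hvar : ∀ i, ∫ ω, (z ω i) ^ 2 ∂μ = 1)
    (c : EuclideanSpace ℝ (Fin d)) :
    ∫ ω, ⟪z ω, c⟫ • z ω ∂μ = c := by
  have hint := smul_int z hzm hz3 c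
  refine PiLp.ext fun i => ?_
  have hcoord : (∫ ω, ⟪z ω, c⟫ • z ω ∂μ) i
      = ∫ ω, (⟪z ω, c⟫ • z ω) i ∂μ :=
    ((EuclideanSpace.proj i : EuclideanSpace ℝ (Fin d) →L[ℝ] ℝ).integral_comp_comm hint).symm
  rw [hcoord]
  have hexp : ∀ ω, (⟪z ω, c⟫ • z ω) i = ∑ k, c k * (z ω k * z ω i) := by
    intro ω
    simp only [PiLp.smul_apply, smul_eq_mul, PiLp.inner_apply, RCLike.inner_apply, conj_trivial,
      Finset.sum_mul]
    exact Finset.sum_congr rfl fun k _ => by ring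
  simp_rw [hexp]
  rw [integral_finset_sum _ fun k _ => (coord_mul_int z hzm hz3 k i).const_mul _]
  have : ∀ k, ∫ ω, c k * (z ω k * z ω i) ∂μ = c k * if k = i then 1 else 0 := by
    intro k
    rw [integral_const_mul, second_moment z hzm hzint hz3 hindep hmean hvar k i]
  simp_rw [this]
  simp

lemma outer_A_int (z : Ω → EuclideanSpace ℝ (Fin d)) (hzm : Measurable z)
    (hz3 : Integrable (fun ω => ‖z ω‖ ^ 3) μ)
    (A : EuclideanSpace ℝ (Fin d) →L[ℝ] EuclideanSpace ℝ (Fin m)) :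
    Integrable (fun ω => outerCLM (z ω) (A (z ω))) μ := by
  refine Integrable.mono' (((integrable_const (1:ℝ)).add hz3).const_mul ‖A‖)
    ((outerCLM_continuous.measurable.comp
      (hzm.prodMk (A.continuous.measurable.comp hzm)))).aestronglyMeasurable
    (Filter.Eventually.of_forall fun ω => ?_)
  calc ‖outerCLM (z ω) (A (z ω))‖ ≤ ‖z ω‖ * ‖A (z ω)‖ := outerCLM_norm_le _ _
    _ ≤ ‖z ω‖ * (‖A‖ * ‖z ω‖) := by gcongr; exact A.le_opNorm _
    _ = ‖A‖ * ‖z ω‖ ^ 2 := by ring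
    _ ≤ ‖A‖ * (1 + ‖z ω‖ ^ 3) :=
        mul_le_mul_of_nonneg_left (norm_sq_le _) (norm_nonneg A)

lemma outer_A_integral (z : Ω → EuclideanSpace ℝ (Fin d)) (hzm : Measurable z)
    (hzint : Integrable z μ) (hz3 : Integrable (fun ω => ‖z ω‖ ^ 3) μ)
    (hindep : iIndepFun (fun i ω => z ω i) μ)
    (hmean : ∀ i, ∫ ω, z ω i ∂μ = 0) (hvar : ∀ i, ∫ ω, (z ω i) ^ 2 ∂μ = 1)
    (A : EuclideanSpace ℝ (Fin d) →L[ℝ] EuclideanSpace ℝ (Fin m)) :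
    ∫ ω, outerCLM (z ω) (A (z ω)) ∂μ = ContinuousLinearMap.adjoint A := by
  refine ContinuousLinearMap.ext fun v => ?_
  rw [ContinuousLinearMap.integral_apply (outer_A_int z hzm hz3 A)]
  have : ∀ ω, outerCLM (z ω) (A (z ω)) v = ⟪z ω, ContinuousLinearMap.adjoint A v⟫ • z ω := by
    intro ω
    show ⟪A (z ω), v⟫ • z ω = _
    rw [← ContinuousLinearMap.adjoint_inner_right]
  simp_rw [this]
  exact key_vector z hzm hzint hz3 hindep hmean hvar _

lemma taylor_bound {E F : Type*} [NormedAddCommGroup E] [NormedSpace ℝ E]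
    [NormedAddCommGroup F] [NormedSpace ℝ F] [CompleteSpace F]
    (f : E → F) (L : ℝ) (hdiff : Differentiable ℝ f)
    (hLip : ∀ x y, ‖fderiv ℝ f x - fderiv ℝ f y‖ ≤ L * ‖x - y‖)
    (x h : E) : ‖f (x + h) - f x - fderiv ℝ f x h‖ ≤ L / 2 * ‖h‖ ^ 2 := by
  have hL0 : 0 ≤ L ∨ h = 0 := by
    rcases eq_or_ne h 0 with h0 | h0
    · exact Or.inr h0
    · left
      have := hLip (x + h) x
      have h1 : (0:ℝ) ≤ L * ‖x + h - x‖ := le_trans (norm_nonneg _) this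
      have h2 : 0 < ‖x + h - x‖ := by simpa using norm_pos_iff.2 h0
      nlinarith
  rcases hL0 with hL0 | rfl
  swap
  · simp
  have hcont : Continuous (fderiv ℝ f) := by
    refine (LipschitzWith.of_dist_le_mul (K := L.toNNReal) fun a b => ?_).continuous
    rw [dist_eq_norm, dist_eq_norm]
    exact le_trans (hLip a b) (by gcongr; exact Real.le_coe_toNNReal L)
  set g' : ℝ → F := fun t => fderiv ℝ f (x + t • h) h with hg'
  have hgderiv : ∀ t : ℝ, HasDerivAt (fun t : ℝ => f (x + t • h)) (g' t) t := by
    intro t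
    have h1 : HasDerivAt (fun t : ℝ => x + t • h) h t := by
      simpa using ((hasDerivAt_id t).smul_const h).const_add x
    exact (hdiff (x + t • h)).hasFDerivAt.comp_hasDerivAt t h1
  have hg'cont : Continuous g' := by
    exact (hcont.comp (continuous_const.add (continuous_id.smul continuous_const))).clm_apply
      continuous_const
  have hFTC : ∫ t in (0:ℝ)..1, g' t = f (x + h) - f x := by
    have := intervalIntegral.integral_eq_sub_of_hasDerivAt
      (f := fun t : ℝ => f (x + t • h)) (f' := g')
      (fun t _ => hgderiv t) (hg'cont.intervalIntegrable 0 1)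
    simpa using this
  have key : f (x + h) - f x - fderiv ℝ f x h
      = ∫ t in (0:ℝ)..1, (g' t - fderiv ℝ f x h) := by
    rw [intervalIntegral.integral_sub (hg'cont.intervalIntegrable 0 1)
      (intervalIntegrable_const), hFTC, intervalIntegral.integral_const]
    simp
  rw [key]
  have hbound : ∀ t ∈ Set.Icc (0:ℝ) 1, ‖g' t - fderiv ℝ f x h‖ ≤ (L * ‖h‖ ^ 2) * t := by
    intro t ht
    have : g' t - fderiv ℝ f x h = (fderiv ℝ f (x + t • h) - fderiv ℝ f x) h := rfl
    rw [this]
    calc ‖(fderiv ℝ f (x + t • h) - fderiv ℝ f x) h‖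
        ≤ ‖fderiv ℝ f (x + t • h) - fderiv ℝ f x‖ * ‖h‖ :=
          ContinuousLinearMap.le_opNorm _ _
      _ ≤ (L * ‖x + t • h - x‖) * ‖h‖ := by gcongr; exact hLip _ _
      _ = (L * ‖h‖ ^ 2) * t := by
          have : ‖x + t • h - x‖ = t * ‖h‖ := by
            rw [add_sub_cancel_left, norm_smul, Real.norm_eq_abs, abs_of_nonneg ht.1]
          rw [this]; ring
  have hval : ∫ t in (0:ℝ)..1, (L * ‖h‖ ^ 2) * t = L / 2 * ‖h‖ ^ 2 := by
    rw [intervalIntegral.integral_const_mul, integral_id]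
    ring
  calc ‖∫ t in (0:ℝ)..1, (g' t - fderiv ℝ f x h)‖
      ≤ |∫ t in (0:ℝ)..1, (L * ‖h‖ ^ 2) * t| := by
        refine intervalIntegral.norm_integral_le_abs_of_norm_le ?_ ?_
        · refine (ae_restrict_iff' measurableSet_Ioc).2 (Filter.Eventually.of_forall ?_)
          intro t ht
          norm_num at ht
          exact hbound t ⟨ht.1.le, ht.2⟩
        · exact (continuous_const.mul continuous_id).intervalIntegrable 0 1
    _ = L / 2 * ‖h‖ ^ 2 := by
        rw [hval, abs_of_nonneg (by positivity)]

end Aux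

set_option maxHeartbeats 1000000 in
/-- **Lemma 3, single-point Jacobian estimator.** If `E[z] = 0` and
`z f(θ+αz)ᵀ` is integrable, then `E[z (f(θ+αz)/α)ᵀ] = E[z ((f(θ+αz)-f(θ))/α)ᵀ]`.
Consequently, if moreover `f` is differentiable with `L_J`-Lipschitz Jacobian,
the coordinates of `z` are mutually independent with mean `0` and variance `1`,
and `E[‖z‖³] < ∞`, then
`‖E[z (f(θ+αz)/α)ᵀ] - J_f(θ)ᵀ‖ ≤ (L_J α / 2) E[‖z‖³]` in operator norm. -/
theorem stmt5 {Ω : Type*} [MeasurableSpace Ω] {μ : Measure Ω} [IsProbabilityMeasure μ]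
    {d m : ℕ} (f : EuclideanSpace ℝ (Fin d) → EuclideanSpace ℝ (Fin m))
    (hfmeas : Measurable f)
    (θ : EuclideanSpace ℝ (Fin d)) (α : ℝ) (hα : 0 < α)
    (z : Ω → EuclideanSpace ℝ (Fin d)) (hzm : Measurable z)
    (hzint : Integrable z μ)
    (hzmean : ∫ ω, z ω ∂μ = 0)
    (hint : Integrable (fun ω => outerCLM (z ω) (f (θ + α • z ω))) μ) :
    (∫ ω, outerCLM (z ω) (α⁻¹ • f (θ + α • z ω)) ∂μ
        = ∫ ω, outerCLM (z ω) (α⁻¹ • (f (θ + α • z ω) - f θ)) ∂μ)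
    ∧ (∀ L_J : ℝ, Differentiable ℝ f →
        (∀ x y, ‖fderiv ℝ f x - fderiv ℝ f y‖ ≤ L_J * ‖x - y‖) →
        iIndepFun (fun i ω => z ω i) μ →
        (∀ i, ∫ ω, z ω i ∂μ = 0) →
        (∀ i, ∫ ω, (z ω i) ^ 2 ∂μ = 1) →
        Integrable (fun ω => ‖z ω‖ ^ 3) μ →
        ‖(∫ ω, outerCLM (z ω) (α⁻¹ • f (θ + α • z ω)) ∂μ)
            - ContinuousLinearMap.adjoint (fderiv ℝ f θ)‖
          ≤ L_J * α / 2 * ∫ ω, ‖z ω‖ ^ 3 ∂μ) := by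
  -- the constant part
  set L : EuclideanSpace ℝ (Fin d) →L[ℝ] (EuclideanSpace ℝ (Fin m) →L[ℝ] EuclideanSpace ℝ (Fin d))
    := (ContinuousLinearMap.smulRightL ℝ (EuclideanSpace ℝ (Fin m)) (EuclideanSpace ℝ (Fin d)))
        (innerSL ℝ (f θ)) with hL
  have hLc : ∀ u, outerCLM u (f θ) = L u := fun u => rfl
  have hintc : Integrable (fun ω => outerCLM (z ω) (f θ)) μ := by
    simp_rw [hLc]
    exact L.integrable_comp hzint
  have hzeroc : ∫ ω, outerCLM (z ω) (f θ) ∂μ = 0 := by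
    simp_rw [hLc]
    rw [L.integral_comp_comm hzint, hzmean, map_zero]
  have hrw : ∀ ω, outerCLM (z ω) (α⁻¹ • (f (θ + α • z ω) - f θ))
      = α⁻¹ • outerCLM (z ω) (f (θ + α • z ω)) - α⁻¹ • outerCLM (z ω) (f θ) := by
    intro ω
    rw [outerCLM_smul_right, outerCLM_sub_right, smul_sub]
  have hrw2 : ∀ ω, outerCLM (z ω) (α⁻¹ • f (θ + α • z ω))
      = α⁻¹ • outerCLM (z ω) (f (θ + α • z ω)) := fun ω => outerCLM_smul_right _ _ _
  have hint2 : Integrable (fun ω => outerCLM (z ω) (α⁻¹ • (f (θ + α • z ω) - f θ))) μ := by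
    simp_rw [hrw]
    exact (hint.smul α⁻¹).sub (hintc.smul α⁻¹)
  have part1 : ∫ ω, outerCLM (z ω) (α⁻¹ • f (θ + α • z ω)) ∂μ
      = ∫ ω, outerCLM (z ω) (α⁻¹ • (f (θ + α • z ω) - f θ)) ∂μ := by
    have e1 : ∫ ω, outerCLM (z ω) (α⁻¹ • f (θ + α • z ω)) ∂μ
        = α⁻¹ • ∫ ω, outerCLM (z ω) (f (θ + α • z ω)) ∂μ := by
      simp_rw [hrw2]
      rw [integral_smul]
    have e2 : ∫ ω, outerCLM (z ω) (α⁻¹ • (f (θ + α • z ω) - f θ)) ∂μ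
        = α⁻¹ • ∫ ω, outerCLM (z ω) (f (θ + α • z ω)) ∂μ := by
      have h1 : Integrable (fun ω => α⁻¹ • outerCLM (z ω) (f (θ + α • z ω))) μ :=
        hint.smul α⁻¹
      have h2 : Integrable (fun ω => α⁻¹ • outerCLM (z ω) (f θ)) μ := hintc.smul α⁻¹
      simp_rw [hrw]
      rw [integral_sub h1 h2, integral_smul, integral_smul, hzeroc, smul_zero, sub_zero]
    rw [e1, e2]
  refine ⟨part1, ?_⟩
  intro L_J hdiff hLip hindep hmean hvar hz3
  set A := fderiv ℝ f θ with hA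
  have hAint := outer_A_int z hzm hz3 A
  have hAadj := outer_A_integral z hzm hzint hz3 hindep hmean hvar A
  have hinterr : Integrable (fun ω => outerCLM (z ω) (α⁻¹ • (f (θ + α • z ω) - f θ))
      - outerCLM (z ω) (A (z ω))) μ := hint2.sub hAint
  have heq : (∫ ω, outerCLM (z ω) (α⁻¹ • f (θ + α • z ω)) ∂μ)
      - ContinuousLinearMap.adjoint A
      = ∫ ω, (outerCLM (z ω) (α⁻¹ • (f (θ + α • z ω) - f θ))
          - outerCLM (z ω) (A (z ω))) ∂μ := by
    rw [part1, ← hAadj, ← integral_sub hint2 hAint]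
  rw [heq]
  have hpt : ∀ ω, ‖outerCLM (z ω) (α⁻¹ • (f (θ + α • z ω) - f θ))
      - outerCLM (z ω) (A (z ω))‖ ≤ L_J * α / 2 * ‖z ω‖ ^ 3 := by
    intro ω
    have hcomb : outerCLM (z ω) (α⁻¹ • (f (θ + α • z ω) - f θ)) - outerCLM (z ω) (A (z ω))
        = outerCLM (z ω) (α⁻¹ • (f (θ + α • z ω) - f θ) - A (z ω)) :=
      (outerCLM_sub_right _ _ _).symm
    have hw : α⁻¹ • (f (θ + α • z ω) - f θ) - A (z ω)
        = α⁻¹ • (f (θ + α • z ω) - f θ - A (α • z ω)) := by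
      have key : ∀ X Y : EuclideanSpace ℝ (Fin m), α⁻¹ • (X - α • Y) = α⁻¹ • X - Y := by
        intro X Y
        rw [smul_sub, smul_smul, inv_mul_cancel₀ hα.ne', one_smul]
      rw [A.map_smul, key]
    have htay : ‖f (θ + α • z ω) - f θ - A (α • z ω)‖ ≤ L_J / 2 * ‖α • z ω‖ ^ 2 :=
      taylor_bound f L_J hdiff hLip θ (α • z ω)
    have hnorm : ‖α • z ω‖ = α * ‖z ω‖ := by
      rw [norm_smul, Real.norm_eq_abs, abs_of_pos hα]
    calc ‖outerCLM (z ω) (α⁻¹ • (f (θ + α • z ω) - f θ)) - outerCLM (z ω) (A (z ω))‖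
        = ‖outerCLM (z ω) (α⁻¹ • (f (θ + α • z ω) - f θ) - A (z ω))‖ := by rw [hcomb]
      _ ≤ ‖z ω‖ * ‖α⁻¹ • (f (θ + α • z ω) - f θ) - A (z ω)‖ := outerCLM_norm_le _ _
      _ = ‖z ω‖ * (α⁻¹ * ‖f (θ + α • z ω) - f θ - A (α • z ω)‖) := by
          rw [hw, norm_smul, Real.norm_eq_abs, abs_of_pos (inv_pos.2 hα)]
      _ ≤ ‖z ω‖ * (α⁻¹ * (L_J / 2 * (α * ‖z ω‖) ^ 2)) :=
          mul_le_mul_of_nonneg_left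
            (mul_le_mul_of_nonneg_left (by rw [← hnorm]; exact htay)
              (le_of_lt (inv_pos.2 hα)))
            (norm_nonneg _)
      _ = L_J * α / 2 * ‖z ω‖ ^ 3 := by
          field_simp
  calc ‖∫ ω, (outerCLM (z ω) (α⁻¹ • (f (θ + α • z ω) - f θ))
          - outerCLM (z ω) (A (z ω))) ∂μ‖
      ≤ ∫ ω, ‖outerCLM (z ω) (α⁻¹ • (f (θ + α • z ω) - f θ))
          - outerCLM (z ω) (A (z ω))‖ ∂μ := norm_integral_le_integral_norm _
    _ ≤ ∫ ω, L_J * α / 2 * ‖z ω‖ ^ 3 ∂μ :=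
        integral_mono hinterr.norm (hz3.const_mul _) hpt
    _ = L_J * α / 2 * ∫ ω, ‖z ω‖ ^ 3 ∂μ := integral_const_mul _ _
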